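/- Let L/ℚ be a non-Galois cubic field with Galois closure M, σ ∈ Gal(M/ℚ) of order 3, and τ the generator of Gal(M/L). Let ρ₁ be a prime element of O_M over an odd rational prime p splitting completely in M, and set α_i = N_{M/L}(σ^{i−1}ρ₁) for i = 1, 2. Let q ≠ p be an odd rational prime with exactly two primes 𝔓₁, 𝔓₂ of O_L above it, i.e. qO_L = 𝔓₁²𝔓₂ or qO_L = 𝔓₁𝔓₂ with f(𝔓₁/q) = 2, where 𝔓₁O_M = 𝔔₁ · τ𝔔₁ for a prime 𝔔₁ of O_M and 𝔓₂O_M = 𝔔₂² or 𝔔₂. Set 𝔔₃ = σ²𝔔₁. Then (α₁/𝔓₁) = (ρ₁/𝔔₁)(ρ₁/τ𝔔₁); moreover (α₂/𝔓₁) = (ρ₁/𝔔₃)(ρ₁/𝔔₁) if σ𝔔₁ = τ𝔔₁, while (α₂/𝔓₁) = (ρ₁/𝔔₃)(ρ₁/𝔔₂) if σ𝔔₁ = 𝔔₂. -/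

import Mathlib

set_option maxHeartbeats 1000000
set_option synthInstance.maxHeartbeats 200000
set_option linter.unusedVariables false

open NumberField Module

-- The quadratic residue symbol of `x` at the prime ideal `P`:
-- `1` if `x` is a square in the residue ring `R ⧸ P`, and `-1` otherwise.
open scoped Classical in
noncomputable def legSym {R : Type*} [CommRing R] (x : R) (P : Ideal R) : ℤ :=
  if ∃ y : R, x - y ^ 2 ∈ P then 1 else -1

/-- `p` splits completely in the number field `K`. -/
def SplitsCompletelyIn (K : Type*) [Field K] [NumberField K] (p : ℕ) : Prop :=
  {P : Ideal (𝓞 K) | P.IsPrime ∧ (p : 𝓞 K) ∈ P}.ncard = Module.finrank ℚ K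

/-- The image of an ideal of `𝓞 M` under the automorphism of `𝓞 M` induced by a
field automorphism of `M`. -/
noncomputable def galMapIdeal {M : Type*} [Field M] [NumberField M] (σ : M ≃ₐ[ℚ] M)
    (I : Ideal (𝓞 M)) : Ideal (𝓞 M) :=
  Ideal.map (galRestrict ℤ ℚ M (𝓞 M) σ) I

/-! ### Auxiliary lemmas -/

lemma exists_sq_iff {R : Type*} [CommRing R] (x : R) (P : Ideal R) :
    (∃ y : R, x - y ^ 2 ∈ P) ↔ IsSquare (Ideal.Quotient.mk P x) := by
  constructor
  · rintro ⟨y, hy⟩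
    exact ⟨Ideal.Quotient.mk P y,
      by rw [← map_mul, ← sq, Ideal.Quotient.mk_eq_mk_iff_sub_mem]; exact hy⟩
  · rintro ⟨z, hz⟩
    obtain ⟨y, rfl⟩ := Ideal.Quotient.mk_surjective z
    exact ⟨y, by rwa [← Ideal.Quotient.mk_eq_mk_iff_sub_mem, sq, map_mul]⟩

open scoped Classical in
lemma legSym_def' {R : Type*} [CommRing R] (x : R) (P : Ideal R) :
    legSym x P = if IsSquare (Ideal.Quotient.mk P x) then 1 else -1 := by
  unfold legSym
  simp only [exists_sq_iff]

lemma legSym_equiv {R S : Type*} [CommRing R] [CommRing S] (e : R ≃+* S) (x : R) (I : Ideal R) :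
    legSym (e x) (Ideal.map (e : R →+* S) I) = legSym x I := by
  unfold legSym
  congr 1
  rw [eq_iff_iff]
  rw [show Ideal.map (e : R →+* S) I = Ideal.comap (e.symm : S →+* R) I from
    (Ideal.comap_symm e).symm ▸ rfl]
  constructor
  · rintro ⟨y, hy⟩
    refine ⟨e.symm y, ?_⟩
    have := hy
    simp only [Ideal.mem_comap] at this
    simpa using this
  · rintro ⟨y, hy⟩
    refine ⟨e y, ?_⟩
    simp only [Ideal.mem_comap]
    simpa using hy

lemma quadChar_eq {F : Type*} [Field F] [Fintype F] [DecidableEq F] {x : F} (hx : x ≠ 0) :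
    (quadraticChar F x : ℤ) = if IsSquare x then 1 else -1 := by
  by_cases h : IsSquare x
  · rw [if_pos h, (quadraticChar_one_iff_isSquare hx).mpr h]
  · rw [if_neg h, quadraticChar_neg_one_iff_not_isSquare.mpr h]

lemma isSquare_mul_iff_ff {F : Type*} [Field F] [Fintype F] [DecidableEq F] {a b : F}
    (ha : a ≠ 0) (hb : b ≠ 0) : IsSquare (a * b) ↔ (IsSquare a ↔ IsSquare b) := by
  have h := map_mul (quadraticChar F) a b
  rw [quadChar_eq ha, quadChar_eq hb, quadChar_eq (mul_ne_zero ha hb)] at h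
  split_ifs at h with h1 h2 h3 <;> norm_num at h <;> tauto

lemma legSym_mul {R : Type*} [CommRing R] (P : Ideal R) [P.IsMaximal] [Finite (R ⧸ P)]
    (a b : R) (ha : Ideal.Quotient.mk P a ≠ 0) (hb : Ideal.Quotient.mk P b ≠ 0) :
    legSym (a * b) P = legSym a P * legSym b P := by
  classical
  letI : Field (R ⧸ P) := Ideal.Quotient.field P
  letI : Fintype (R ⧸ P) := Fintype.ofFinite _
  rw [legSym_def', legSym_def', legSym_def', map_mul]
  have key := isSquare_mul_iff_ff ha hb
  split_ifs with h1 h2 h3 <;> norm_num <;> tauto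

lemma legSym_of_residue_equiv {R S : Type*} [CommRing R] [CommRing S] {P : Ideal R}
    {Q : Ideal S} (e : (R ⧸ P) ≃+* (S ⧸ Q)) {x : R} {y : S}
    (h : e (Ideal.Quotient.mk P x) = Ideal.Quotient.mk Q y) :
    legSym x P = legSym y Q := by
  rw [legSym_def', legSym_def']
  have hiff : IsSquare (Ideal.Quotient.mk P x) ↔ IsSquare (Ideal.Quotient.mk Q y) := by
    rw [← h]
    constructor
    · rintro ⟨r, hr⟩
      exact ⟨e r, by rw [hr, map_mul]⟩
    · rintro ⟨s, hs⟩
      refine ⟨e.symm s, e.injective ?_⟩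
      rw [hs, map_mul]
      simp
  split_ifs with h1 h2 h3 <;> tauto

lemma absNorm_span_natCast (M : Type*) [Field M] [NumberField M] (q : ℕ) :
    Ideal.absNorm (Ideal.span {(q : 𝓞 M)}) = q ^ (finrank ℚ M) := by
  rw [Ideal.absNorm_span_singleton]
  rw [show ((q : 𝓞 M)) = algebraMap ℤ (𝓞 M) (q : ℤ) by simp]
  rw [Algebra.norm_algebraMap_of_basis (Module.Free.chooseBasis ℤ (𝓞 M))]
  rw [← finrank_eq_card_chooseBasisIndex, RingOfIntegers.rank]
  rw [Int.natAbs_pow]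
  norm_num

section gal

variable {M : Type*} [Field M] [NumberField M]

lemma galMapIdeal_eq_ringHom_map (e : M ≃ₐ[ℚ] M) (I : Ideal (𝓞 M)) :
    galMapIdeal e I = Ideal.map ((galRestrict ℤ ℚ M (𝓞 M) e : (𝓞 M) ≃+* (𝓞 M)) :
      (𝓞 M) →+* (𝓞 M)) I := rfl

lemma galMapIdeal_eq_equiv_map (e : M ≃ₐ[ℚ] M) (I : Ideal (𝓞 M)) :
    galMapIdeal e I = Ideal.map ((galRestrict ℤ ℚ M (𝓞 M) e : (𝓞 M) ≃+* (𝓞 M))) I := rfl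

lemma galMapIdeal_mul (e₁ e₂ : M ≃ₐ[ℚ] M) (I : Ideal (𝓞 M)) :
    galMapIdeal (e₁ * e₂) I = galMapIdeal e₁ (galMapIdeal e₂ I) := by
  rw [galMapIdeal_eq_ringHom_map, galMapIdeal_eq_ringHom_map, galMapIdeal_eq_ringHom_map,
    Ideal.map_map]
  rw [MulEquiv.map_mul (galRestrict ℤ ℚ M (𝓞 M)) e₁ e₂]
  congr 1

lemma galMapIdeal_one (I : Ideal (𝓞 M)) : galMapIdeal (1 : M ≃ₐ[ℚ] M) I = I := by
  rw [galMapIdeal_eq_ringHom_map]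
  rw [MulEquiv.map_one (galRestrict ℤ ℚ M (𝓞 M))]
  exact Ideal.map_id I

lemma galMapIdeal_isPrime (e : M ≃ₐ[ℚ] M) (I : Ideal (𝓞 M)) [I.IsPrime] :
    (galMapIdeal e I).IsPrime := by
  rw [galMapIdeal_eq_equiv_map, ← Ideal.comap_symm]
  exact Ideal.IsPrime.comap _

lemma mem_galMapIdeal (e : M ≃ₐ[ℚ] M) {I : Ideal (𝓞 M)} {x : 𝓞 M} (hx : x ∈ I) :
    galRestrict ℤ ℚ M (𝓞 M) e x ∈ galMapIdeal e I :=
  Ideal.mem_map_of_mem _ hx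

lemma natCast_mem_galMapIdeal (e : M ≃ₐ[ℚ] M) {I : Ideal (𝓞 M)} {n : ℕ}
    (hn : (n : 𝓞 M) ∈ I) : (n : 𝓞 M) ∈ galMapIdeal e I := by
  have := mem_galMapIdeal e hn
  rwa [map_natCast] at this

lemma absNorm_galMapIdeal (e : M ≃ₐ[ℚ] M) (I : Ideal (𝓞 M)) :
    Ideal.absNorm (galMapIdeal e I) = Ideal.absNorm I := by
  rw [galMapIdeal_eq_ringHom_map, Ideal.absNorm_apply, Ideal.absNorm_apply,
    Submodule.cardQuot_apply, Submodule.cardQuot_apply]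
  exact (Nat.card_congr (Ideal.quotientEquiv I _
    ((galRestrict ℤ ℚ M (𝓞 M) e : (𝓞 M) ≃+* (𝓞 M))) rfl).toEquiv).symm

end gal

theorem stmt7 (L M : Type*) [Field L] [Field M] [NumberField L] [NumberField M]
    [Algebra L M] [IsScalarTower ℚ L M]
    (hL3 : finrank ℚ L = 3) (hLnG : ¬ IsGalois ℚ L)
    (hMGal : IsGalois ℚ M) (hM6 : finrank ℚ M = 6)
    (σ τ : M ≃ₐ[ℚ] M) (hσ : orderOf σ = 3) (hτ : orderOf τ = 2)
    (hτL : ∀ x : L, τ (algebraMap L M x) = algebraMap L M x)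
    (p : ℕ) (hp : p.Prime) (hpodd : p ≠ 2) (hpsplit : SplitsCompletelyIn M p)
    (ρ₁ : 𝓞 M) (hρprime : Prime ρ₁) (hρp : (p : 𝓞 M) ∈ Ideal.span {ρ₁})
    -- αᵢ = N_{M/L}(σ^{i-1} ρ₁) = (σ^{i-1} ρ₁) · (τ σ^{i-1} ρ₁), as an element of 𝓞 L,
    -- for i = 1, 2
    (α₁ α₂ : 𝓞 L)
    (hα₁ : algebraMap L M (algebraMap (𝓞 L) L α₁) =
      algebraMap (𝓞 M) M ρ₁ * τ (algebraMap (𝓞 M) M ρ₁))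
    (hα₂ : algebraMap L M (algebraMap (𝓞 L) L α₂) =
      σ (algebraMap (𝓞 M) M ρ₁) * τ (σ (algebraMap (𝓞 M) M ρ₁)))
    -- q ≠ p is an odd prime with exactly the two primes 𝔓₁, 𝔓₂ of 𝓞 L above it:
    -- q 𝓞 L = 𝔓₁² 𝔓₂, or q 𝓞 L = 𝔓₁ 𝔓₂ with f(𝔓₁/q) = 2
    (q : ℕ) (hq : q.Prime) (hqodd : q ≠ 2) (hqp : q ≠ p)
    (𝔓₁ 𝔓₂ : Ideal (𝓞 L)) (h𝔓₁prime : 𝔓₁.IsPrime) (h𝔓₂prime : 𝔓₂.IsPrime)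
    (h𝔓ne : 𝔓₁ ≠ 𝔓₂)
    (hqfact : Ideal.span {(q : 𝓞 L)} = 𝔓₁ ^ 2 * 𝔓₂ ∨
      (Ideal.span {(q : 𝓞 L)} = 𝔓₁ * 𝔓₂ ∧ Ideal.absNorm 𝔓₁ = q ^ 2))
    -- 𝔓₁ 𝓞 M = 𝔔₁ · τ𝔔₁, and 𝔓₂ 𝓞 M = 𝔔₂² or 𝔔₂
    (𝔔₁ 𝔔₂ : Ideal (𝓞 M)) (h𝔔₁prime : 𝔔₁.IsPrime) (h𝔔₂prime : 𝔔₂.IsPrime)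
    (h𝔔₁ : Ideal.map (algebraMap (𝓞 L) (𝓞 M)) 𝔓₁ = 𝔔₁ * galMapIdeal τ 𝔔₁)
    (h𝔔₂ : Ideal.map (algebraMap (𝓞 L) (𝓞 M)) 𝔓₂ = 𝔔₂ ^ 2 ∨
      Ideal.map (algebraMap (𝓞 L) (𝓞 M)) 𝔓₂ = 𝔔₂)
    -- 𝔔₃ = σ² 𝔔₁
    (𝔔₃ : Ideal (𝓞 M)) (h𝔔₃ : 𝔔₃ = galMapIdeal (σ ^ 2) 𝔔₁) :
    legSym α₁ 𝔓₁ = legSym ρ₁ 𝔔₁ * legSym ρ₁ (galMapIdeal τ 𝔔₁) ∧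
    (galMapIdeal σ 𝔔₁ = galMapIdeal τ 𝔔₁ →
      legSym α₂ 𝔓₁ = legSym ρ₁ 𝔔₃ * legSym ρ₁ 𝔔₁) ∧
    (galMapIdeal σ 𝔔₁ = 𝔔₂ →
      legSym α₂ 𝔓₁ = legSym ρ₁ 𝔔₃ * legSym ρ₁ 𝔔₂) := by
  classical
  haveI := h𝔔₁prime
  haveI := h𝔔₂prime
  -- group identities
  have hτ2 : τ * τ = 1 := by
    have h := pow_orderOf_eq_one τ; rwa [hτ, pow_two] at h
  have hσ3 : σ * σ ^ 2 = 1 := by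
    have h := pow_orderOf_eq_one σ; rwa [hσ, pow_succ'] at h
  have hσ3' : σ ^ 2 * σ = 1 := by
    have h := pow_orderOf_eq_one σ; rwa [hσ, pow_succ] at h
  have hτinv : ∀ I : Ideal (𝓞 M), galMapIdeal τ (galMapIdeal τ I) = I := fun I => by
    rw [← galMapIdeal_mul, hτ2, galMapIdeal_one]
  -- q memberships
  have hq0L : (q : 𝓞 L) ≠ 0 := Nat.cast_ne_zero.mpr hq.ne_zero
  have hq0M : (q : 𝓞 M) ≠ 0 := Nat.cast_ne_zero.mpr hq.ne_zero
  have hq𝔓₁ : (q : 𝓞 L) ∈ 𝔓₁ := by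
    have h1 : Ideal.span {(q : 𝓞 L)} ≤ 𝔓₁ := by
      rcases hqfact with h | ⟨h, _⟩ <;> rw [h]
      · exact le_trans Ideal.mul_le_left (Ideal.pow_le_self two_ne_zero)
      · exact Ideal.mul_le_left
    exact h1 (Ideal.mem_span_singleton_self _)
  have hq𝔓₂ : (q : 𝓞 L) ∈ 𝔓₂ := by
    have h1 : Ideal.span {(q : 𝓞 L)} ≤ 𝔓₂ := by
      rcases hqfact with h | ⟨h, _⟩ <;> rw [h] <;> exact Ideal.mul_le_right
    exact h1 (Ideal.mem_span_singleton_self _)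
  have h𝔓₁max : 𝔓₁.IsMaximal :=
    h𝔓₁prime.isMaximal (fun hb => hq0L (by rw [hb] at hq𝔓₁; exact Ideal.mem_bot.mp hq𝔓₁))
  have h𝔓₂max : 𝔓₂.IsMaximal :=
    h𝔓₂prime.isMaximal (fun hb => hq0L (by rw [hb] at hq𝔓₂; exact Ideal.mem_bot.mp hq𝔓₂))
  have hmap𝔓₁le : Ideal.map (algebraMap (𝓞 L) (𝓞 M)) 𝔓₁ ≤ 𝔔₁ := by
    rw [h𝔔₁]; exact Ideal.mul_le_left
  have hmap𝔓₂le : Ideal.map (algebraMap (𝓞 L) (𝓞 M)) 𝔓₂ ≤ 𝔔₂ := by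
    rcases h𝔔₂ with h | h
    · rw [h]; exact Ideal.pow_le_self two_ne_zero
    · rw [h]
  have hq𝔔₁ : (q : 𝓞 M) ∈ 𝔔₁ := by
    have h1 : algebraMap (𝓞 L) (𝓞 M) (q : 𝓞 L) ∈ Ideal.map (algebraMap (𝓞 L) (𝓞 M)) 𝔓₁ :=
      Ideal.mem_map_of_mem _ hq𝔓₁
    have h2 := hmap𝔓₁le h1
    rwa [map_natCast] at h2
  have hq𝔔₂ : (q : 𝓞 M) ∈ 𝔔₂ := by
    have h1 : algebraMap (𝓞 L) (𝓞 M) (q : 𝓞 L) ∈ Ideal.map (algebraMap (𝓞 L) (𝓞 M)) 𝔓₂ :=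
      Ideal.mem_map_of_mem _ hq𝔓₂
    have h2 := hmap𝔓₂le h1
    rwa [map_natCast] at h2
  have hmax : ∀ 𝔍 : Ideal (𝓞 M), 𝔍.IsPrime → (q : 𝓞 M) ∈ 𝔍 → 𝔍.IsMaximal := fun 𝔍 h hq' =>
    h.isMaximal (fun hb => hq0M (by rw [hb] at hq'; exact Ideal.mem_bot.mp hq'))
  haveI h𝔔₁max : 𝔔₁.IsMaximal := hmax 𝔔₁ h𝔔₁prime hq𝔔₁
  have hτ𝔔₁prime : (galMapIdeal τ 𝔔₁).IsPrime := galMapIdeal_isPrime τ 𝔔₁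
  have hqτ𝔔₁ : (q : 𝓞 M) ∈ galMapIdeal τ 𝔔₁ := natCast_mem_galMapIdeal τ hq𝔔₁
  -- coprimality of p, q and non-membership of ρ₁-conjugates
  have hcop : Nat.Coprime p q := (Nat.coprime_primes hp hq).mpr (Ne.symm hqp)
  have hnotin : ∀ (x : 𝓞 M) (𝔔 : Ideal (𝓞 M)), 𝔔.IsPrime → (q : 𝓞 M) ∈ 𝔔 →
      x ∣ (p : 𝓞 M) → Ideal.Quotient.mk 𝔔 x ≠ 0 := by
    intro x 𝔔 hQ hqQ hdvd h0
    rw [Ideal.Quotient.eq_zero_iff_mem] at h0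
    obtain ⟨c, hc⟩ := hdvd
    have hpQ : (p : 𝓞 M) ∈ 𝔔 := by rw [hc]; exact Ideal.mul_mem_right _ _ h0
    have hbez := Nat.gcd_eq_gcd_ab p q
    rw [hcop] at hbez
    have h1 : (1 : 𝓞 M) = (p : 𝓞 M) * ((Nat.gcdA p q : ℤ) : 𝓞 M) +
        (q : 𝓞 M) * ((Nat.gcdB p q : ℤ) : 𝓞 M) := by
      have := congrArg (fun z : ℤ => ((z : ℤ) : 𝓞 M)) hbez
      push_cast at this
      simpa using this
    have : (1 : 𝓞 M) ∈ 𝔔 := by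
      rw [h1]
      exact Ideal.add_mem _ (Ideal.mul_mem_right _ _ hpQ) (Ideal.mul_mem_right _ _ hqQ)
    exact hQ.ne_top (Ideal.eq_top_iff_one _ |>.mpr this)
  have hρdvd : ρ₁ ∣ (p : 𝓞 M) := Ideal.mem_span_singleton.mp hρp
  have hgdvd : ∀ e : M ≃ₐ[ℚ] M, (galRestrict ℤ ℚ M (𝓞 M) e) ρ₁ ∣ (p : 𝓞 M) := by
    intro e
    obtain ⟨c, hc⟩ := hρdvd
    refine ⟨galRestrict ℤ ℚ M (𝓞 M) e c, ?_⟩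
    have := congrArg (galRestrict ℤ ℚ M (𝓞 M) e) hc
    rwa [map_natCast, map_mul] at this
  -- 𝔔₁ ≠ 𝔔₂
  have h𝔔ne : 𝔔₁ ≠ 𝔔₂ := by
    intro h
    have h1 : 𝔓₁ ≤ Ideal.comap (algebraMap (𝓞 L) (𝓞 M)) 𝔔₁ :=
      Ideal.map_le_iff_le_comap.mp hmap𝔓₁le
    have h2 : 𝔓₂ ≤ Ideal.comap (algebraMap (𝓞 L) (𝓞 M)) 𝔔₁ := by
      rw [h]; exact Ideal.map_le_iff_le_comap.mp hmap𝔓₂le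
    have hsup : 𝔓₁ ⊔ 𝔓₂ = ⊤ := h𝔓₁max.coprime_of_ne h𝔓₂max h𝔓ne
    have : (⊤ : Ideal (𝓞 L)) ≤ Ideal.comap (algebraMap (𝓞 L) (𝓞 M)) 𝔔₁ := by
      rw [← hsup]; exact sup_le h1 h2
    have hcp : (Ideal.comap (algebraMap (𝓞 L) (𝓞 M)) 𝔔₁).IsPrime := Ideal.IsPrime.comap _
    exact hcp.ne_top (top_le_iff.mp this)
  -- classification of primes above q
  have hclass : ∀ 𝔔 : Ideal (𝓞 M), 𝔔.IsPrime → (q : 𝓞 M) ∈ 𝔔 →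
      𝔔 = 𝔔₁ ∨ 𝔔 = galMapIdeal τ 𝔔₁ ∨ 𝔔 = 𝔔₂ := by
    intro 𝔔 hQ hqQ
    haveI := hQ
    have hcomap : (Ideal.comap (algebraMap (𝓞 L) (𝓞 M)) 𝔔).IsPrime := Ideal.IsPrime.comap _
    have hqc : (q : 𝓞 L) ∈ Ideal.comap (algebraMap (𝓞 L) (𝓞 M)) 𝔔 := by
      rw [Ideal.mem_comap, map_natCast]; exact hqQ
    have hle : Ideal.span {(q : 𝓞 L)} ≤ Ideal.comap (algebraMap (𝓞 L) (𝓞 M)) 𝔔 :=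
      (Ideal.span_singleton_le_iff_mem _).mpr hqc
    have h12 : 𝔓₁ ≤ Ideal.comap (algebraMap (𝓞 L) (𝓞 M)) 𝔔 ∨
        𝔓₂ ≤ Ideal.comap (algebraMap (𝓞 L) (𝓞 M)) 𝔔 := by
      rcases hqfact with h | ⟨h, _⟩ <;> rw [h] at hle
      · rcases hcomap.mul_le.mp hle with h' | h'
        · left; exact (Ideal.IsPrime.pow_le_iff two_ne_zero).mp h'
        · right; exact h'
      · rcases hcomap.mul_le.mp hle with h' | h'
        · left; exact h'
        · right; exact h'
    have hmapc : ∀ 𝔓 : Ideal (𝓞 L), 𝔓.IsMaximal → 𝔓 ≤ Ideal.comap (algebraMap (𝓞 L) (𝓞 M)) 𝔔 →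
        Ideal.map (algebraMap (𝓞 L) (𝓞 M)) 𝔓 ≤ 𝔔 := by
      intro 𝔓 hm hsub
      have h𝔓eq : 𝔓 = Ideal.comap (algebraMap (𝓞 L) (𝓞 M)) 𝔔 := hm.eq_of_le hcomap.ne_top hsub
      rw [h𝔓eq]
      exact Ideal.map_comap_le
    rcases h12 with hsub | hsub
    · have hle2 : 𝔔₁ * galMapIdeal τ 𝔔₁ ≤ 𝔔 := by
        rw [← h𝔔₁]; exact hmapc 𝔓₁ h𝔓₁max hsub
      rcases hQ.mul_le.mp hle2 with h' | h'
      · left; exact ((hmax 𝔔₁ h𝔔₁prime hq𝔔₁).eq_of_le hQ.ne_top h').symm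
      · right; left; exact ((hmax _ hτ𝔔₁prime hqτ𝔔₁).eq_of_le hQ.ne_top h').symm
    · have hle2 : Ideal.map (algebraMap (𝓞 L) (𝓞 M)) 𝔓₂ ≤ 𝔔 := hmapc 𝔓₂ h𝔓₂max hsub
      have h𝔔₂le : 𝔔₂ ≤ 𝔔 := by
        rcases h𝔔₂ with h | h <;> rw [h] at hle2
        · exact (Ideal.IsPrime.pow_le_iff two_ne_zero).mp hle2
        · exact hle2
      right; right; exact ((hmax 𝔔₂ h𝔔₂prime hq𝔔₂).eq_of_le hQ.ne_top h𝔔₂le).symm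
  -- norm computations
  have hNτ : Ideal.absNorm (galMapIdeal τ 𝔔₁) = Ideal.absNorm 𝔔₁ := absNorm_galMapIdeal τ 𝔔₁
  have hNmap𝔓₁ : Ideal.absNorm (Ideal.map (algebraMap (𝓞 L) (𝓞 M)) 𝔓₁) =
      Ideal.absNorm 𝔔₁ ^ 2 := by
    rw [h𝔔₁, _root_.map_mul Ideal.absNorm, hNτ, sq]
  obtain ⟨c, hc12, hNmap𝔓₂⟩ : ∃ c : ℕ, (c = 1 ∨ c = 2) ∧
      Ideal.absNorm (Ideal.map (algebraMap (𝓞 L) (𝓞 M)) 𝔓₂) = Ideal.absNorm 𝔔₂ ^ c := by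
    rcases h𝔔₂ with h | h
    · exact ⟨2, Or.inr rfl, by rw [h, map_pow]⟩
    · exact ⟨1, Or.inl rfl, by rw [h, pow_one]⟩
  have hmapq : Ideal.map (algebraMap (𝓞 L) (𝓞 M)) (Ideal.span {(q : 𝓞 L)}) =
      Ideal.span {(q : 𝓞 M)} := by
    rw [Ideal.map_span, Set.image_singleton, map_natCast]
  have hNM : Ideal.absNorm (Ideal.span {(q : 𝓞 M)}) = q ^ 6 := by
    rw [absNorm_span_natCast, hM6]
  have hNLq : Ideal.absNorm (Ideal.span {(q : 𝓞 L)}) = q ^ 3 := by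
    rw [absNorm_span_natCast, hL3]
  have hNQ1ne1 : Ideal.absNorm 𝔔₁ ≠ 1 := fun h => h𝔔₁prime.ne_top (Ideal.absNorm_eq_one_iff.mp h)
  have hNQ2ne1 : Ideal.absNorm 𝔔₂ ≠ 1 := fun h => h𝔔₂prime.ne_top (Ideal.absNorm_eq_one_iff.mp h)
  -- the residue field embedding
  have hle𝔓₁c : 𝔓₁ ≤ Ideal.comap (algebraMap (𝓞 L) (𝓞 M)) 𝔔₁ :=
    Ideal.map_le_iff_le_comap.mp hmap𝔓₁le
  letI : Field (𝓞 L ⧸ 𝔓₁) := Ideal.Quotient.field 𝔓₁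
  haveI : Nontrivial (𝓞 M ⧸ 𝔔₁) := Ideal.Quotient.nontrivial_iff.mpr h𝔔₁prime.ne_top
  set φ : (𝓞 L ⧸ 𝔓₁) →+* (𝓞 M ⧸ 𝔔₁) :=
    Ideal.quotientMap 𝔔₁ (algebraMap (𝓞 L) (𝓞 M)) hle𝔓₁c with hφ
  have hφinj : Function.Injective φ := φ.injective
  have hcard𝔔₁ : Nat.card (𝓞 M ⧸ 𝔔₁) = Ideal.absNorm 𝔔₁ := by
    rw [Ideal.absNorm_apply, Submodule.cardQuot_apply]
  have hcard𝔓₁ : Nat.card (𝓞 L ⧸ 𝔓₁) = Ideal.absNorm 𝔓₁ := by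
    rw [Ideal.absNorm_apply, Submodule.cardQuot_apply]
  haveI hfinE : Finite (𝓞 M ⧸ 𝔔₁) := by
    refine (Ideal.absNorm_ne_zero_iff 𝔔₁).mp fun h0 => ?_
    rw [Ideal.absNorm_eq_zero_iff] at h0
    rw [h0] at hq𝔔₁
    exact hq0M (Ideal.mem_bot.mp hq𝔔₁)
  have hcardle : Nat.card (𝓞 L ⧸ 𝔓₁) ≤ Nat.card (𝓞 M ⧸ 𝔔₁) :=
    Nat.card_le_card_of_injective φ hφinj
  -- absNorm 𝔔₁ = absNorm 𝔓₁
  have hNeq : Ideal.absNorm 𝔔₁ = Ideal.absNorm 𝔓₁ := by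
    have hglobal : (q : ℕ) ^ 6 =
        Ideal.absNorm (Ideal.map (algebraMap (𝓞 L) (𝓞 M)) (Ideal.span {(q : 𝓞 L)})) := by
      rw [hmapq, hNM]
    obtain ⟨d, hd6, hdQ⟩ := (Nat.dvd_prime_pow hq).mp
      (show Ideal.absNorm 𝔔₁ ∣ q ^ 6 by
        rcases hqfact with hfac | ⟨hfac, _⟩ <;>
          rw [hfac, Ideal.map_mul, _root_.map_mul Ideal.absNorm] at hglobal
        · rw [Ideal.map_pow, map_pow, hNmap𝔓₁, hNmap𝔓₂] at hglobal
          exact ⟨Ideal.absNorm 𝔔₁ ^ 2 * Ideal.absNorm 𝔔₁ * Ideal.absNorm 𝔔₂ ^ c,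
            by rw [hglobal]; ring⟩
        · rw [hNmap𝔓₁, hNmap𝔓₂] at hglobal
          exact ⟨Ideal.absNorm 𝔔₁ * Ideal.absNorm 𝔔₂ ^ c, by rw [hglobal]; ring⟩)
    obtain ⟨e', he6, heQ⟩ := (Nat.dvd_prime_pow hq).mp
      (show Ideal.absNorm 𝔔₂ ∣ q ^ 6 by
        rcases hqfact with hfac | ⟨hfac, _⟩ <;>
          rw [hfac, Ideal.map_mul, _root_.map_mul Ideal.absNorm] at hglobal
        · rw [Ideal.map_pow, map_pow, hNmap𝔓₁, hNmap𝔓₂] at hglobal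
          rcases hc12 with rfl | rfl
          · exact ⟨(Ideal.absNorm 𝔔₁ ^ 2) ^ 2, by rw [hglobal]; ring⟩
          · exact ⟨(Ideal.absNorm 𝔔₁ ^ 2) ^ 2 * Ideal.absNorm 𝔔₂, by rw [hglobal]; ring⟩
        · rw [hNmap𝔓₁, hNmap𝔓₂] at hglobal
          rcases hc12 with rfl | rfl
          · exact ⟨Ideal.absNorm 𝔔₁ ^ 2, by rw [hglobal]; ring⟩
          · exact ⟨Ideal.absNorm 𝔔₁ ^ 2 * Ideal.absNorm 𝔔₂, by rw [hglobal]; ring⟩)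
    have hd1 : 1 ≤ d := by
      rcases Nat.eq_zero_or_pos d with rfl | h
      · exact absurd (by simpa using hdQ) hNQ1ne1
      · exact h
    have he1 : 1 ≤ e' := by
      rcases Nat.eq_zero_or_pos e' with rfl | h
      · exact absurd (by simpa using heQ) hNQ2ne1
      · exact h
    rcases hqfact with hfac | ⟨hfac, hN1⟩
    · -- q 𝓞L = 𝔓₁² 𝔓₂ : absNorm 𝔓₁ = q
      have heqL : (q : ℕ) ^ 3 = Ideal.absNorm 𝔓₁ ^ 2 * Ideal.absNorm 𝔓₂ := by
        rw [← hNLq, hfac, _root_.map_mul Ideal.absNorm, map_pow]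
      obtain ⟨a, ha3, haQ⟩ := (Nat.dvd_prime_pow hq).mp
        (show Ideal.absNorm 𝔓₁ ∣ q ^ 3 from
          ⟨Ideal.absNorm 𝔓₁ * Ideal.absNorm 𝔓₂, by rw [heqL]; ring⟩)
      obtain ⟨b, hb3, hbQ⟩ := (Nat.dvd_prime_pow hq).mp
        (show Ideal.absNorm 𝔓₂ ∣ q ^ 3 from
          ⟨Ideal.absNorm 𝔓₁ ^ 2, by rw [heqL]; ring⟩)
      have ha1 : 1 ≤ a := by
        rcases Nat.eq_zero_or_pos a with rfl | h
        · exact absurd (by simpa using haQ)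
            (fun h => h𝔓₁prime.ne_top (Ideal.absNorm_eq_one_iff.mp h))
        · exact h
      have hb1 : 1 ≤ b := by
        rcases Nat.eq_zero_or_pos b with rfl | h
        · exact absurd (by simpa using hbQ)
            (fun h => h𝔓₂prime.ne_top (Ideal.absNorm_eq_one_iff.mp h))
        · exact h
      rw [haQ, hbQ, ← pow_mul, ← pow_add] at heqL
      have hexpL : 3 = a * 2 + b := Nat.pow_right_injective hq.two_le heqL
      have ha : a = 1 := by omega
      -- global equation : 4d + c*e' = 6
      rw [hfac, Ideal.map_mul, _root_.map_mul Ideal.absNorm, Ideal.map_pow, map_pow,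
        hNmap𝔓₁, hNmap𝔓₂, hdQ, heQ, ← pow_mul, ← pow_mul, ← pow_mul, ← pow_add] at hglobal
      have hexp : 6 = d * (2 * 2) + e' * c := Nat.pow_right_injective hq.two_le hglobal
      have hd : d = 1 := by rcases hc12 with rfl | rfl <;> omega
      rw [hdQ, hd, haQ, ha]
    · -- q 𝓞L = 𝔓₁ 𝔓₂ with absNorm 𝔓₁ = q²
      rw [hfac, Ideal.map_mul, _root_.map_mul Ideal.absNorm,
        hNmap𝔓₁, hNmap𝔓₂, hdQ, heQ, ← pow_mul, ← pow_mul, ← pow_add] at hglobal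
      have hexp : 6 = d * 2 + e' * c := Nat.pow_right_injective hq.two_le hglobal
      have hdle : d ≤ 2 := by rcases hc12 with rfl | rfl <;> omega
      have hdge : 2 ≤ d := by
        have h2 : (q : ℕ) ^ 2 ≤ q ^ d := by
          rw [← hN1, ← hcard𝔓₁, ← hdQ, ← hcard𝔔₁]
          exact hcardle
        exact (Nat.pow_le_pow_iff_right hq.one_lt).mp h2
      rw [hdQ, hN1]
      congr 1
      omega
  -- the residue field isomorphism and transfer
  have hbij : Function.Bijective φ :=
    (Nat.bijective_iff_injective_and_card φ).mpr
      ⟨hφinj, by rw [hcard𝔓₁, hcard𝔔₁, hNeq]⟩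
  have htrans : ∀ x : 𝓞 L, legSym x 𝔓₁ = legSym (algebraMap (𝓞 L) (𝓞 M) x) 𝔔₁ := by
    intro x
    refine legSym_of_residue_equiv (RingEquiv.ofBijective φ hbij) ?_
    show φ (Ideal.Quotient.mk 𝔓₁ x) = _
    rw [hφ]
    exact Ideal.quotientMap_mk
  -- expressions for α₁ and α₂ in 𝓞 M
  have hA1 : algebraMap (𝓞 L) (𝓞 M) α₁ = ρ₁ * galRestrict ℤ ℚ M (𝓞 M) τ ρ₁ := by
    apply RingOfIntegers.coe_injective
    rw [map_mul, algebraMap_galRestrict_apply]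
    rw [← IsScalarTower.algebraMap_apply (𝓞 L) (𝓞 M) M,
      IsScalarTower.algebraMap_apply (𝓞 L) L M]
    exact hα₁
  have hA2 : algebraMap (𝓞 L) (𝓞 M) α₂ =
      galRestrict ℤ ℚ M (𝓞 M) σ ρ₁ * galRestrict ℤ ℚ M (𝓞 M) (τ * σ) ρ₁ := by
    apply RingOfIntegers.coe_injective
    rw [map_mul, algebraMap_galRestrict_apply, algebraMap_galRestrict_apply]
    rw [← IsScalarTower.algebraMap_apply (𝓞 L) (𝓞 M) M,
      IsScalarTower.algebraMap_apply (𝓞 L) L M]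
    rw [hα₂]
    rfl
  -- nonvanishing of residues
  have hρ𝔔₁ : Ideal.Quotient.mk 𝔔₁ ρ₁ ≠ 0 := hnotin ρ₁ 𝔔₁ h𝔔₁prime hq𝔔₁ hρdvd
  have hgρ : ∀ e : M ≃ₐ[ℚ] M, Ideal.Quotient.mk 𝔔₁ (galRestrict ℤ ℚ M (𝓞 M) e ρ₁) ≠ 0 :=
    fun e => hnotin _ 𝔔₁ h𝔔₁prime hq𝔔₁ (hgdvd e)
  -- transport identities
  have hleg_τ : legSym (galRestrict ℤ ℚ M (𝓞 M) τ ρ₁) 𝔔₁ = legSym ρ₁ (galMapIdeal τ 𝔔₁) := by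
    have h := legSym_equiv ((galRestrict ℤ ℚ M (𝓞 M) τ : (𝓞 M) ≃+* (𝓞 M))) ρ₁ (galMapIdeal τ 𝔔₁)
    rw [← galMapIdeal_eq_ringHom_map, hτinv] at h
    exact h
  have hleg_σ2 : legSym ρ₁ 𝔔₃ = legSym (galRestrict ℤ ℚ M (𝓞 M) σ ρ₁) 𝔔₁ := by
    have h := legSym_equiv ((galRestrict ℤ ℚ M (𝓞 M) (σ ^ 2) : (𝓞 M) ≃+* (𝓞 M)))
      (galRestrict ℤ ℚ M (𝓞 M) σ ρ₁) 𝔔₁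
    rw [← galMapIdeal_eq_ringHom_map] at h
    have helt : galRestrict ℤ ℚ M (𝓞 M) (σ ^ 2) (galRestrict ℤ ℚ M (𝓞 M) σ ρ₁) = ρ₁ := by
      have h2 : (galRestrict ℤ ℚ M (𝓞 M) (σ ^ 2) * galRestrict ℤ ℚ M (𝓞 M) σ) ρ₁ = ρ₁ := by
        rw [← MulEquiv.map_mul (galRestrict ℤ ℚ M (𝓞 M)), hσ3',
          MulEquiv.map_one (galRestrict ℤ ℚ M (𝓞 M))]
        rfl
      exact h2
    rw [h𝔔₃]
    calc legSym ρ₁ (galMapIdeal (σ ^ 2) 𝔔₁)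
        = legSym (galRestrict ℤ ℚ M (𝓞 M) (σ ^ 2) (galRestrict ℤ ℚ M (𝓞 M) σ ρ₁))
            (galMapIdeal (σ ^ 2) 𝔔₁) := by rw [helt]
      _ = legSym (galRestrict ℤ ℚ M (𝓞 M) σ ρ₁) 𝔔₁ := h
  refine ⟨?_, ?_, ?_⟩
  · rw [htrans α₁, hA1, legSym_mul 𝔔₁ _ _ hρ𝔔₁ (hgρ τ), hleg_τ]
  · intro hcase
    rw [htrans α₂, hA2, legSym_mul 𝔔₁ _ _ (hgρ σ) (hgρ (τ * σ)), hleg_σ2]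
    congr 1
    have h := legSym_equiv ((galRestrict ℤ ℚ M (𝓞 M) (τ * σ) : (𝓞 M) ≃+* (𝓞 M))) ρ₁ 𝔔₁
    rw [← galMapIdeal_eq_ringHom_map] at h
    have hid : galMapIdeal (τ * σ) 𝔔₁ = 𝔔₁ := by
      rw [galMapIdeal_mul, hcase, hτinv]
    rw [hid] at h
    exact h
  · intro hcase
    have hστ : galMapIdeal (σ ^ 2) 𝔔₁ = galMapIdeal τ 𝔔₁ := by
      have hp2 : (galMapIdeal (σ ^ 2) 𝔔₁).IsPrime := galMapIdeal_isPrime _ _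
      have hq2 : (q : 𝓞 M) ∈ galMapIdeal (σ ^ 2) 𝔔₁ := natCast_mem_galMapIdeal _ hq𝔔₁
      rcases hclass _ hp2 hq2 with h | h | h
      · exfalso
        have h2 := congrArg (galMapIdeal σ) h
        rw [← galMapIdeal_mul, hσ3, galMapIdeal_one, hcase] at h2
        exact h𝔔ne h2
      · exact h
      · exfalso
        have h' : galMapIdeal (σ ^ 2) 𝔔₁ = galMapIdeal σ 𝔔₁ := by rw [h, ← hcase]
        have h2 := congrArg (galMapIdeal σ) h'
        rw [← galMapIdeal_mul, ← galMapIdeal_mul, hσ3, galMapIdeal_one, ← pow_two, h] at h2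
        exact h𝔔ne h2
    rw [htrans α₂, hA2, legSym_mul 𝔔₁ _ _ (hgρ σ) (hgρ (τ * σ)), hleg_σ2]
    congr 1
    have h := legSym_equiv ((galRestrict ℤ ℚ M (𝓞 M) (τ * σ) : (𝓞 M) ≃+* (𝓞 M))) ρ₁ 𝔔₂
    rw [← galMapIdeal_eq_ringHom_map] at h
    have hid : galMapIdeal (τ * σ) 𝔔₂ = 𝔔₁ := by
      rw [galMapIdeal_mul, ← hcase,
        show galMapIdeal σ (galMapIdeal σ 𝔔₁) = galMapIdeal (σ ^ 2) 𝔔₁ by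
          rw [← galMapIdeal_mul, ← pow_two],
        hστ, hτinv]
    rw [hid] at h
    exact h
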